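/- arXiv:1511.06074 — 2 statements merged into one kernel-verified Lean document; each statement's English description precedes it below -/
import Mathlib

section
/- For real parameters a > 0, b > 1, a natural number n ≥ 1, and real ρ with 0 < ρ < 1, the double series Σ_{k≥1} ((-1)^{k-1}/k) (ρ^k/k!) Σ_{i=0}^{k-1} (-1)^i binom(k-1, i) Π_{j=-i}^{k-i-1} (n+j)(a+n+j-1)/(a+b+2n+j-2) can be rewritten, after interchanging summations and reindexing, as Σ_{i=0}^{n-1} Σ_{k≥0} ((-1)^k/(k+i+1)) (ρ^{k+i+1}/(k+i+1)!) binom(k+i, i) Π_{j=n-i}^{k+n} j(a+j-1)/(a+b+n+j-2). -/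
open scoped BigOperators

noncomputable def poch (x : ℝ) (k : ℕ) : ℝ := (ascPochhammer ℝ k).eval x

noncomputable def hyp2F1 (a b c z : ℝ) : ℝ :=
  ∑' k : ℕ, poch a k * poch b k / (poch c k * (Nat.factorial k)) * z ^ k

noncomputable def jacobiP (q : ℕ) (α β : ℝ) (x : ℝ) : ℝ :=
  poch (α + 1) q / (Nat.factorial q) *
    ∑ k ∈ Finset.range (q + 1),
      poch (-(q : ℝ)) k * poch ((q : ℝ) + α + β + 1) k / (poch (α + 1) k * (Nat.factorial k)) *
        ((1 - x) / 2) ^ k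

noncomputable def laguerreL (q : ℕ) (α : ℝ) (x : ℝ) : ℝ :=
  ∑ k ∈ Finset.range (q + 1),
    (-1 : ℝ) ^ k * (Real.Gamma ((q : ℝ) + α + 1) /
      (Real.Gamma (α + (k : ℝ) + 1) * (Nat.factorial (q - k)))) * x ^ k / (Nat.factorial k)

section CapacityAux
open Finset

-- factorial growth lemma
lemma fact_aux (m d : ℕ) : (m + d).factorial ≤ m.factorial * (m + d) ^ d := by
  induction d with
  | zero => simp
  | succ d ih =>
    have h1 : (m + (d+1)).factorial = (m + d + 1) * (m + d).factorial := by
      rw [← Nat.add_assoc]; exact Nat.factorial_succ _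
    calc (m + (d+1)).factorial = (m + d + 1) * (m + d).factorial := h1
      _ ≤ (m + d + 1) * (m.factorial * (m + d) ^ d) := Nat.mul_le_mul_left _ ih
      _ ≤ (m + d + 1) * (m.factorial * (m + d + 1) ^ d) := by
          have := Nat.pow_le_pow_left (Nat.le_succ (m + d)) d
          exact Nat.mul_le_mul_left _ (Nat.mul_le_mul_left _ this)
      _ = m.factorial * (m + (d+1)) ^ (d+1) := by ring

-- product over Icc bounded by factorial
lemma prod_Icc_le_fact (s M : ℕ) (hs : 1 ≤ s) : (∏ j ∈ Icc s M, j) ≤ M.factorial := by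
  calc (∏ j ∈ Icc s M, j) ≤ ∏ j ∈ Icc 1 M, j := by
        refine Finset.prod_le_prod_of_subset_of_one_le' (Finset.Icc_subset_Icc_left hs) ?_
        intro x hx _; exact (Finset.mem_Icc.1 hx).1
    _ = M.factorial := by
        rw [← Finset.Ico_add_one_right_eq_Icc, Finset.prod_Ico_eq_prod_range,
          ← Finset.prod_range_add_one_eq_factorial]
        refine Finset.prod_congr (by rw [Nat.add_sub_cancel]) fun t _ => by omega

lemma g_summable (a b : ℝ) (ha : 0 < a) (hb : 1 < b)
    (n : ℕ) (hn : 1 ≤ n) (ρ : ℝ) (hρ0 : 0 < ρ) (hρ1 : ρ < 1) (i : ℕ) (hi : i < n) :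
    Summable (fun k : ℕ =>
      (-1 : ℝ) ^ k / (k + i + 1) * (ρ ^ (k + i + 1) / (Nat.factorial (k + i + 1))) *
        (Nat.choose (k + i) i) *
        ∏ j ∈ Finset.Icc (n - i) (n + k), (j : ℝ) * (a + j - 1) / (a + b + n + j - 2)) := by
  have hρne : ρ ≠ 0 := ne_of_gt hρ0
  have hmaj : Summable (fun k : ℕ => ((n + k : ℕ) : ℝ) ^ (2 * n) * ρ ^ k) := by
    have h0 : Summable (fun k : ℕ => (k : ℝ) ^ (2 * n) * ρ ^ k) :=
      summable_pow_mul_geometric_of_norm_lt_one (2 * n)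
        (by rw [Real.norm_eq_abs, abs_of_pos hρ0]; exact hρ1)
    have h1 := ((_root_.summable_nat_add_iff
      (f := fun k : ℕ => (k : ℝ) ^ (2 * n) * ρ ^ k) n).2 h0).mul_left ((ρ ^ n)⁻¹)
    refine h1.congr fun k => ?_
    push_cast
    rw [pow_add]
    field_simp
    ring
  refine Summable.of_norm_bounded hmaj fun k => ?_
  have hone : (1:ℝ) ≤ n := by exact_mod_cast hn
  -- bounds on the product factors
  have hfac : ∀ j ∈ Finset.Icc (n - i) (n + k),
      (0:ℝ) ≤ (j : ℝ) * (a + j - 1) / (a + b + n + j - 2) ∧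
      (j : ℝ) * (a + j - 1) / (a + b + n + j - 2) ≤ (j : ℝ) := by
    intro j hj
    have h1 : 1 ≤ j := le_trans (by omega) (Finset.mem_Icc.1 hj).1
    have h1R : (1:ℝ) ≤ (j : ℝ) := by exact_mod_cast h1
    have hd : (0:ℝ) < a + b + n + j - 2 := by nlinarith
    refine ⟨div_nonneg (by nlinarith) hd.le, ?_⟩
    rw [div_le_iff₀ hd]
    nlinarith
  have hP0 : (0:ℝ) ≤ ∏ j ∈ Finset.Icc (n - i) (n + k),
      (j : ℝ) * (a + j - 1) / (a + b + n + j - 2) :=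
    Finset.prod_nonneg fun j hj => (hfac j hj).1
  have hPle : (∏ j ∈ Finset.Icc (n - i) (n + k),
      (j : ℝ) * (a + j - 1) / (a + b + n + j - 2)) ≤
      ((∏ j ∈ Finset.Icc (n - i) (n + k), j : ℕ) : ℝ) := by
    rw [Nat.cast_prod]
    exact Finset.prod_le_prod (fun j hj => (hfac j hj).1) (fun j hj => (hfac j hj).2)
  -- the nat inequality
  have hnat : (Nat.choose (k + i) i) * (∏ j ∈ Finset.Icc (n - i) (n + k), j) ≤
      Nat.factorial (k + i + 1) * (n + k) ^ (2 * n) := by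
    have h1 : Nat.choose (k + i) i ≤ (n + k) ^ n :=
      le_trans (Nat.choose_le_pow _ _)
        (le_trans (Nat.pow_le_pow_left (by omega) i) (Nat.pow_le_pow_right (by omega) (by omega)))
    have h2 : (∏ j ∈ Finset.Icc (n - i) (n + k), j) ≤
        Nat.factorial (k + i + 1) * (n + k) ^ n := by
      refine le_trans (prod_Icc_le_fact _ _ (by omega)) ?_
      have h3 : n + k = (k + i + 1) + (n - i - 1) := by omega
      calc (n + k).factorial = ((k + i + 1) + (n - i - 1)).factorial := by rw [← h3]
        _ ≤ (k + i + 1).factorial * ((k + i + 1) + (n - i - 1)) ^ (n - i - 1) := fact_aux _ _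
        _ ≤ (k + i + 1).factorial * (n + k) ^ n := by
            rw [← h3]
            exact Nat.mul_le_mul_left _ (Nat.pow_le_pow_right (by omega) (by omega))
    calc (Nat.choose (k + i) i) * (∏ j ∈ Finset.Icc (n - i) (n + k), j)
        ≤ (n + k) ^ n * (Nat.factorial (k + i + 1) * (n + k) ^ n) := Nat.mul_le_mul h1 h2
      _ = Nat.factorial (k + i + 1) * (n + k) ^ (2 * n) := by rw [two_mul, pow_add]; ring
  have hfacpos : (0:ℝ) < (Nat.factorial (k + i + 1) : ℝ) := by
    exact_mod_cast Nat.factorial_pos _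
  rw [Real.norm_eq_abs, abs_mul, abs_mul, abs_mul,
    abs_of_nonneg (show (0:ℝ) ≤ ρ ^ (k + i + 1) / (Nat.factorial (k + i + 1)) by positivity),
    abs_of_nonneg (show (0:ℝ) ≤ ((Nat.choose (k + i) i : ℕ) : ℝ) by positivity),
    abs_of_nonneg hP0]
  have e1 : |(-1:ℝ) ^ k / ((k : ℝ) + (i : ℝ) + 1)| ≤ 1 := by
    rw [abs_div, abs_pow, abs_neg, abs_one, one_pow,
      abs_of_nonneg (show (0:ℝ) ≤ (k : ℝ) + (i : ℝ) + 1 by positivity)]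
    rw [div_le_one (by positivity)]
    have : (0:ℝ) ≤ (k : ℝ) := Nat.cast_nonneg k
    have : (0:ℝ) ≤ (i : ℝ) := Nat.cast_nonneg i
    linarith
  calc |(-1:ℝ) ^ k / ((k : ℝ) + (i : ℝ) + 1)| *
        (ρ ^ (k + i + 1) / (Nat.factorial (k + i + 1))) *
        ((Nat.choose (k + i) i : ℕ) : ℝ) *
        (∏ j ∈ Finset.Icc (n - i) (n + k), (j : ℝ) * (a + j - 1) / (a + b + n + j - 2))
      ≤ 1 * (ρ ^ (k + i + 1) / (Nat.factorial (k + i + 1))) *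
        ((Nat.choose (k + i) i : ℕ) : ℝ) *
        ((∏ j ∈ Finset.Icc (n - i) (n + k), j : ℕ) : ℝ) := by
        gcongr
    _ ≤ ((n + k : ℕ) : ℝ) ^ (2 * n) * ρ ^ k := by
        rw [one_mul, div_mul_eq_mul_div, div_mul_eq_mul_div, div_le_iff₀ hfacpos]
        have hρK : ρ ^ (k + i + 1) ≤ ρ ^ k :=
          pow_le_pow_of_le_one hρ0.le hρ1.le (by omega)
        have hCP : ((Nat.choose (k + i) i : ℕ) : ℝ) *
            ((∏ j ∈ Finset.Icc (n - i) (n + k), j : ℕ) : ℝ) ≤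
            (Nat.factorial (k + i + 1) : ℝ) * ((n + k : ℕ) : ℝ) ^ (2 * n) := by
          exact_mod_cast hnat
        have h4 : (0:ℝ) ≤ ((Nat.choose (k + i) i : ℕ) : ℝ) *
            ((∏ j ∈ Finset.Icc (n - i) (n + k), j : ℕ) : ℝ) := by positivity
        nlinarith [mul_le_mul hρK hCP h4 (by positivity : (0:ℝ) ≤ ρ ^ k)]

lemma prod_reindex (a b : ℝ) (n i k : ℕ) (hin : i < n) :
    (∏ t ∈ Finset.range (k + i + 1),
      ((n : ℝ) + t - i) * (a + n + t - i - 1) / (a + b + 2 * n + t - i - 2)) =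
    ∏ j ∈ Finset.Icc (n - i) (n + k), (j : ℝ) * (a + j - 1) / (a + b + n + j - 2) := by
  rw [← Finset.Ico_add_one_right_eq_Icc, Finset.prod_Ico_eq_prod_range]
  have hcard : n + k + 1 - (n - i) = k + i + 1 := by omega
  rw [hcard]
  refine Finset.prod_congr rfl fun t _ => ?_
  have hcast : ((n - i + t : ℕ) : ℝ) = (n : ℝ) - i + t := by
    push_cast [Nat.cast_sub hin.le]
    ring
  rw [hcast]
  ring

lemma term_eq (a b ρ : ℝ) (n i k : ℕ) (hin : i < n) :
    (-1:ℝ) ^ (k + i) / (((k + i : ℕ) : ℝ) + 1) *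
      (ρ ^ ((k + i) + 1) / (Nat.factorial ((k + i) + 1))) *
      ((-1:ℝ) ^ i * (Nat.choose (k + i) i) *
        ∏ t ∈ Finset.range ((k + i) + 1),
          ((n : ℝ) + t - i) * (a + n + t - i - 1) / (a + b + 2 * n + t - i - 2)) =
    (-1:ℝ) ^ k / ((k : ℝ) + i + 1) * (ρ ^ (k + i + 1) / (Nat.factorial (k + i + 1))) *
      (Nat.choose (k + i) i) *
      ∏ j ∈ Finset.Icc (n - i) (n + k), (j : ℝ) * (a + j - 1) / (a + b + n + j - 2) := by
  rw [← prod_reindex a b n i k hin]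
  have hsign : (-1:ℝ) ^ (k + i) * (-1:ℝ) ^ i = (-1:ℝ) ^ k := by
    rw [pow_add, mul_assoc, ← pow_add, ← two_mul, pow_mul]
    norm_num
  set p := ∏ t ∈ Finset.range ((k + i) + 1),
      ((n : ℝ) + t - i) * (a + n + t - i - 1) / (a + b + 2 * n + t - i - 2) with hp
  push_cast
  rw [← hsign]
  ring

noncomputable def gterm (a b ρ : ℝ) (n i k : ℕ) : ℝ :=
  (-1 : ℝ) ^ k / (k + i + 1) * (ρ ^ (k + i + 1) / (Nat.factorial (k + i + 1))) *
    (Nat.choose (k + i) i) *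
    ∏ j ∈ Finset.Icc (n - i) (n + k), (j : ℝ) * (a + j - 1) / (a + b + n + j - 2)

noncomputable def Fterm (a b ρ : ℝ) (n i m : ℕ) : ℝ :=
  if i ≤ m then gterm a b ρ n i (m - i) else 0

lemma row_eq (a b ρ : ℝ) (n : ℕ) (m : ℕ) :
    (-1 : ℝ) ^ m / (m + 1) * (ρ ^ (m + 1) / (Nat.factorial (m + 1))) *
      ∑ i ∈ Finset.range (m + 1),
        (-1 : ℝ) ^ i * (Nat.choose m i) *
          ∏ t ∈ Finset.range (m + 1),
            ((n : ℝ) + t - i) * (a + n + t - i - 1) / (a + b + 2 * n + t - i - 2) =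
    ∑ i ∈ Finset.range n, Fterm a b ρ n i m := by
  rw [Finset.mul_sum]
  have e1 : ∑ i ∈ Finset.range (m + 1),
      (-1 : ℝ) ^ m / (m + 1) * (ρ ^ (m + 1) / (Nat.factorial (m + 1))) *
        ((-1 : ℝ) ^ i * (Nat.choose m i) *
          ∏ t ∈ Finset.range (m + 1),
            ((n : ℝ) + t - i) * (a + n + t - i - 1) / (a + b + 2 * n + t - i - 2)) =
      ∑ i ∈ Finset.range (min (m + 1) n),
      (-1 : ℝ) ^ m / (m + 1) * (ρ ^ (m + 1) / (Nat.factorial (m + 1))) *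
        ((-1 : ℝ) ^ i * (Nat.choose m i) *
          ∏ t ∈ Finset.range (m + 1),
            ((n : ℝ) + t - i) * (a + n + t - i - 1) / (a + b + 2 * n + t - i - 2)) := by
    refine (Finset.sum_subset (Finset.range_subset_range.2 (min_le_left _ _)) ?_).symm
    intro i hi1 hi2
    have h1 : i ≤ m := by
      have := Finset.mem_range.1 hi1; omega
    have h2 : n ≤ i := by
      by_contra hc
      exact hi2 (Finset.mem_range.2 (lt_min (by omega) (by omega)))
    have hz : (∏ t ∈ Finset.range (m + 1),
        ((n : ℝ) + t - i) * (a + n + t - i - 1) / (a + b + 2 * n + t - i - 2)) = 0 := by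
      apply Finset.prod_eq_zero (Finset.mem_range.2 (show i - n < m + 1 by omega))
      rw [Nat.cast_sub h2, show (n : ℝ) + ((i : ℝ) - n) - i = 0 by ring, zero_mul, zero_div]
    rw [hz]
    ring
  have e2 : ∑ i ∈ Finset.range n, Fterm a b ρ n i m =
      ∑ i ∈ Finset.range (min (m + 1) n), Fterm a b ρ n i m := by
    refine (Finset.sum_subset (Finset.range_subset_range.2 (min_le_right _ _)) ?_).symm
    intro i hi1 hi2
    have h1 : ¬ i ≤ m := by
      have hin : i < n := Finset.mem_range.1 hi1
      by_contra hc
      exact hi2 (Finset.mem_range.2 (lt_min (by omega) (by omega)))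
    simp [Fterm, h1]
  rw [e1, e2]
  refine Finset.sum_congr rfl fun i hi => ?_
  have hi' := Finset.mem_range.1 hi
  have him : i ≤ m := by omega
  have hin : i < n := by omega
  have hkm : m - i + i = m := by omega
  have h := term_eq a b ρ n i (m - i) hin
  rw [hkm] at h
  rw [Fterm, if_pos him, gterm, hkm]
  exact h

end CapacityAux

/-- Rearrangement of the double series appearing in the ergodic capacity:
interchanging the summations and reindexing `k ↦ k + i + 1` (the original outer
series is over `k ≥ 1`, written below with index shift `k = m+1`; in the inner
product of the left-hand side, `j` runs over the integers `-i, …, k-i-1`,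
written via `j = t - i` with `t ∈ {0,…,k-1}`). -/
theorem capacity_series_rearrangement (a b : ℝ) (ha : 0 < a) (hb : 1 < b)
    (n : ℕ) (hn : 1 ≤ n) (ρ : ℝ) (hρ0 : 0 < ρ) (hρ1 : ρ < 1) :
    (∑' m : ℕ,
        (-1 : ℝ) ^ m / (m + 1) * (ρ ^ (m + 1) / (Nat.factorial (m + 1))) *
          ∑ i ∈ Finset.range (m + 1),
            (-1 : ℝ) ^ i * (Nat.choose m i) *
              ∏ t ∈ Finset.range (m + 1),
                ((n : ℝ) + t - i) * (a + n + t - i - 1) / (a + b + 2 * n + t - i - 2)) =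
      ∑ i ∈ Finset.range n,
        ∑' k : ℕ,
          (-1 : ℝ) ^ k / (k + i + 1) * (ρ ^ (k + i + 1) / (Nat.factorial (k + i + 1))) *
            (Nat.choose (k + i) i) *
            ∏ j ∈ Finset.Icc (n - i) (n + k),
              (j : ℝ) * (a + j - 1) / (a + b + n + j - 2) := by
  have hgsum : ∀ i, i < n → Summable (fun k => gterm a b ρ n i k) := by
    intro i hi
    have h := g_summable a b ha hb n hn ρ hρ0 hρ1 i hi
    exact h.congr fun k => by rw [gterm]
  have hFshift : ∀ i k, Fterm a b ρ n i (k + i) = gterm a b ρ n i k := by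
    intro i k
    rw [Fterm, if_pos (Nat.le_add_left i k), Nat.add_sub_cancel]
  have hFsum : ∀ i, i < n → Summable (fun m => Fterm a b ρ n i m) := by
    intro i hi
    exact (_root_.summable_nat_add_iff i).1 ((hgsum i hi).congr fun k => (hFshift i k).symm)
  have hshift_tsum : ∀ i, i < n →
      (∑' m, Fterm a b ρ n i m) = ∑' k, gterm a b ρ n i k := by
    intro i hi
    have hsupp : Function.support (fun m => Fterm a b ρ n i m) ⊆
        Set.range (fun k : ℕ => k + i) := by
      intro m hm
      rcases le_or_gt i m with h | h
      · exact ⟨m - i, by show m - i + i = m; omega⟩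
      · exact absurd (by simp [Fterm, Nat.not_le.2 h]) hm
    rw [← Function.Injective.tsum_eq (add_left_injective i) hsupp]
    exact tsum_congr (hFshift i)
  calc (∑' m : ℕ,
        (-1 : ℝ) ^ m / (m + 1) * (ρ ^ (m + 1) / (Nat.factorial (m + 1))) *
          ∑ i ∈ Finset.range (m + 1),
            (-1 : ℝ) ^ i * (Nat.choose m i) *
              ∏ t ∈ Finset.range (m + 1),
                ((n : ℝ) + t - i) * (a + n + t - i - 1) / (a + b + 2 * n + t - i - 2))
      = ∑' m : ℕ, ∑ i ∈ Finset.range n, Fterm a b ρ n i m :=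
        tsum_congr fun m => row_eq a b ρ n m
    _ = ∑ i ∈ Finset.range n, ∑' m, Fterm a b ρ n i m :=
        Summable.tsum_finsetSum fun i hi => hFsum i (Finset.mem_range.1 hi)
    _ = _ := by
        refine Finset.sum_congr rfl fun i hi => ?_
        rw [hshift_tsum i (Finset.mem_range.1 hi)]
        exact tsum_congr fun k => by rw [gterm]
end

section
/- For integers m, m_t, m_r with m_t, m_r ≤ m and m < m_r + m_t, the ergodic capacity of the Jacobi MIMO channel satisfies C(m_t, m_r, m, ρ) = (m_t + m_r - m) C(1,1,1,ρ) + C(m - m_r, m - m_t, m, ρ), where C(1,1,1,ρ) = ln(1+ρ). -/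
open scoped BigOperators

open MeasureTheory
open scoped Matrix

noncomputable instance matrixMeasurableSpace (m : ℕ) : MeasurableSpace (Matrix (Fin m) (Fin m) ℂ) :=
  (inferInstance : MeasurableSpace (Fin m → Fin m → ℂ))

/-- The `r × t` upper-left corner of an `m × m` matrix. -/
noncomputable def upperLeftCorner (m t r : ℕ) (ht : t ≤ m) (hr : r ≤ m)
    (U : Matrix (Fin m) (Fin m) ℂ) : Matrix (Fin r) (Fin t) ℂ :=
  Matrix.of fun i j => U (Fin.castLE hr i) (Fin.castLE ht j)


section Aux
open Matrix MeasureTheory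
open scoped ComplexOrder


lemma sum_split {M : Type*} [AddCommMonoid M] {m r : ℕ} (hr : r ≤ m) (f : Fin m → M) :
    ∑ k, f k = (∑ i : Fin r, f (Fin.castLE hr i)) + ∑ i : Fin (m - r), f ⟨r + i, by omega⟩ := by
  have h : r + (m - r) = m := by omega
  rw [← Fin.sum_congr' f h, Fin.sum_univ_add]
  congr 1


noncomputable def lowC (m t r : ℕ) (ht : t ≤ m)
    (U : Matrix (Fin m) (Fin m) ℂ) : Matrix (Fin (m - r)) (Fin t) ℂ :=
  Matrix.of fun i j => U ⟨r + i.1, by omega⟩ (Fin.castLE ht j)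

noncomputable def lowD (m t r : ℕ)
    (U : Matrix (Fin m) (Fin m) ℂ) : Matrix (Fin (m - r)) (Fin (m - t)) ℂ :=
  Matrix.of fun i j => U ⟨r + i.1, by omega⟩ ⟨t + j.1, by omega⟩

lemma col_split {m t r : ℕ} (ht : t ≤ m) (hr : r ≤ m) {U : Matrix (Fin m) (Fin m) ℂ}
    (hU : U ∈ Matrix.unitaryGroup (Fin m) ℂ) :
    (upperLeftCorner m t r ht hr U)ᴴ * upperLeftCorner m t r ht hr U
      + (lowC m t r ht U)ᴴ * lowC m t r ht U = 1 := by
  have h1 : star U * U = 1 := Matrix.mem_unitaryGroup_iff'.mp hU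
  ext a b
  have := Matrix.ext_iff.mpr h1 (Fin.castLE ht a) (Fin.castLE ht b)
  rw [Matrix.mul_apply] at this
  simp only [Matrix.add_apply, Matrix.mul_apply, conjTranspose_apply, upperLeftCorner, lowC,
    Matrix.of_apply, Matrix.star_apply] at this ⊢
  rw [sum_split hr (f := fun k => star (U k (Fin.castLE ht a)) * U k (Fin.castLE ht b))] at this
  rw [this]
  rcases eq_or_ne a b with h|h
  · subst h; simp
  · have h2 : Fin.castLE ht a ≠ Fin.castLE ht b := fun hh => h (by
      ext; simpa [Fin.ext_iff] using hh)
    simp [Matrix.one_apply, h, h2]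

lemma row_split {m t r : ℕ} (ht : t ≤ m) (hr : r ≤ m) {U : Matrix (Fin m) (Fin m) ℂ}
    (hU : U ∈ Matrix.unitaryGroup (Fin m) ℂ) :
    lowC m t r ht U * (lowC m t r ht U)ᴴ + lowD m t r U * (lowD m t r U)ᴴ = 1 := by
  have h1 : U * star U = 1 := Matrix.mem_unitaryGroup_iff.mp hU
  ext a b
  have := Matrix.ext_iff.mpr h1 ⟨r + a.1, by omega⟩ ⟨r + b.1, by omega⟩
  rw [Matrix.mul_apply] at this
  simp only [Matrix.add_apply, Matrix.mul_apply, conjTranspose_apply, lowC, lowD,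
    Matrix.of_apply, Matrix.star_apply] at this ⊢
  rw [sum_split ht (f := fun k => U ⟨r + a.1, by omega⟩ k * star (U ⟨r + b.1, by omega⟩ k))] at this
  rw [this]
  rcases eq_or_ne a b with h|h
  · subst h; simp
  · have h2 : (⟨r + a.1, by omega⟩ : Fin m) ≠ ⟨r + b.1, by omega⟩ := fun hh => h (by
      ext; simpa [Fin.ext_iff] using hh)
    simp [Matrix.one_apply, h, h2]

lemma det_identity {m t r : ℕ} (ht : t ≤ m) (hr : r ≤ m) (hm : m < r + t)
    {U : Matrix (Fin m) (Fin m) ℂ} (hU : U ∈ Matrix.unitaryGroup (Fin m) ℂ)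
    (ρ : ℝ) (hρ : 0 ≤ ρ) :
    (1 + (ρ : ℂ) • ((upperLeftCorner m t r ht hr U)ᴴ * upperLeftCorner m t r ht hr U)).det
      = ((1 + ρ : ℝ) : ℂ) ^ (t + r - m) *
        (1 + (ρ : ℂ) • (lowD m t r U * (lowD m t r U)ᴴ)).det := by
  set A := upperLeftCorner m t r ht hr U
  set C := lowC m t r ht U
  set D := lowD m t r U
  have hx : ((1 + ρ : ℝ) : ℂ) ≠ 0 := Complex.ofReal_ne_zero.mpr (by positivity)
  set x : ℂ := ((1 + ρ : ℝ) : ℂ) with hxdef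
  set s : ℂ := (ρ : ℂ) / x with hsdef
  have hxs : x * s = (ρ : ℂ) := by rw [hsdef, mul_comm, div_mul_cancel₀ _ hx]
  have h1s : 1 - s = x⁻¹ := by
    rw [hsdef, one_sub_div hx, show x - (ρ : ℂ) = 1 by rw [hxdef]; push_cast; ring, one_div]
  have hAA : Aᴴ * A = 1 - Cᴴ * C := by
    rw [eq_sub_iff_add_eq]; exact col_split ht hr hU
  have hCC : C * Cᴴ = 1 - D * Dᴴ := by
    rw [eq_sub_iff_add_eq]; exact row_split ht hr hU
  have hx1 : x = 1 + (ρ : ℂ) := by rw [hxdef]; push_cast; ring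
  have step1 : 1 + (ρ : ℂ) • (Aᴴ * A) = x • (1 + (-s) • (Cᴴ * C)) := by
    have key : x * -s = -(ρ : ℂ) := by rw [mul_neg, hxs]
    rw [hAA, smul_add, smul_smul, key, hx1, add_smul, one_smul, smul_sub]
    module
  have step2 : (1 + (-s) • (Cᴴ * C)).det = (1 + (-s) • (C * Cᴴ)).det := by
    rw [show (1 : Matrix (Fin t) (Fin t) ℂ) + (-s) • (Cᴴ * C) = 1 + ((-s) • Cᴴ) * C by
      rw [Matrix.smul_mul]]
    rw [Matrix.det_one_add_mul_comm]
    rw [Matrix.mul_smul]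
  have step3 : 1 + (-s) • (C * Cᴴ) = x⁻¹ • (1 + (ρ : ℂ) • (D * Dᴴ)) := by
    have k1 : (1 - s) * (ρ : ℂ) = s := by rw [h1s, hsdef]; ring
    rw [hCC, ← h1s, smul_add, smul_smul, k1, smul_sub, sub_smul, one_smul]
    module
  rw [step1, Matrix.det_smul, step2, step3, Matrix.det_smul]
  simp only [Fintype.card_fin]
  have hpow : x ^ t = x ^ (t + r - m) * x ^ (m - r) := by
    rw [← pow_add]; congr 1; omega
  rw [hpow, mul_assoc, ← mul_assoc (x ^ (m - r)), ← mul_pow, mul_inv_cancel₀ hx, one_pow, one_mul]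

lemma det_re_bounds {n : ℕ} {M : Matrix (Fin n) (Fin n) ℂ} (hpsd : M.PosSemidef)
    (hle : ∀ x : Fin n → ℂ, star x ⬝ᵥ (M *ᵥ x) ≤ star x ⬝ᵥ x)
    {ρ : ℝ} (hρ : 0 ≤ ρ) :
    1 ≤ (1 + (ρ : ℂ) • M).det.re ∧ (1 + (ρ : ℂ) • M).det.re ≤ (1 + ρ) ^ n := by
  have hherm : (1 + (ρ : ℂ) • M).IsHermitian := by
    unfold Matrix.IsHermitian
    rw [Matrix.conjTranspose_add, Matrix.conjTranspose_smul, Matrix.conjTranspose_one,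
      Complex.star_def, Complex.conj_ofReal, hpsd.1.eq]
  have key : ∀ i, 1 ≤ hherm.eigenvalues i ∧ hherm.eigenvalues i ≤ 1 + ρ := by
    intro i
    set v : Fin n → ℂ := (hherm.eigenvectorBasis i).ofLp with hv
    have hval := hherm.eigenvalues_eq i
    have expand : star v ⬝ᵥ ((1 + (ρ : ℂ) • M) *ᵥ v)
        = star v ⬝ᵥ v + (ρ : ℂ) * (star v ⬝ᵥ (M *ᵥ v)) := by
      rw [Matrix.add_mulVec, Matrix.one_mulVec, dotProduct_add,
        Matrix.smul_mulVec, dotProduct_smul, smul_eq_mul]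
    have hvv : star v ⬝ᵥ v = 1 := by
      have h1 := inner_self_eq_norm_sq_to_K (𝕜 := ℂ) (hherm.eigenvectorBasis i)
      rw [EuclideanSpace.inner_eq_star_dotProduct] at h1
      rw [← hv, dotProduct_comm] at h1
      rw [h1, hherm.eigenvectorBasis.orthonormal.1 i]
      norm_num
    have hb0 : 0 ≤ star v ⬝ᵥ (M *ᵥ v) := hpsd.dotProduct_mulVec_nonneg v
    have hba : star v ⬝ᵥ (M *ᵥ v) ≤ 1 := hvv ▸ hle v
    obtain ⟨hre0, him⟩ := Complex.le_def.mp hb0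
    have hre1 : (star v ⬝ᵥ (M *ᵥ v)).re ≤ 1 := by
      have := (Complex.le_def.mp hba).1
      simpa using this
    simp only [Complex.zero_re, Complex.zero_im] at hre0 him
    have hval' : hherm.eigenvalues i = 1 + ρ * (star v ⬝ᵥ (M *ᵥ v)).re := by
      rw [hval, ← hv, expand, hvv]
      simp [RCLike.re_to_complex, Complex.add_re, Complex.mul_re, Complex.ofReal_re,
        Complex.ofReal_im, ← him]
    constructor
    · rw [hval']; nlinarith
    · rw [hval']; nlinarith
  have hdet : (1 + (ρ : ℂ) • M).det = (((∏ i, hherm.eigenvalues i : ℝ)) : ℂ) := by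
    rw [hherm.det_eq_prod_eigenvalues]; push_cast; rfl
  rw [hdet, Complex.ofReal_re]
  constructor
  · calc (1 : ℝ) = ∏ _i : Fin n, 1 := by simp
      _ ≤ ∏ i, hherm.eigenvalues i :=
          Finset.prod_le_prod (by simp) fun i _ => (key i).1
  · calc ∏ i, hherm.eigenvalues i ≤ ∏ _i : Fin n, (1 + ρ) :=
          Finset.prod_le_prod (fun i _ => by linarith [(key i).1]) (fun i _ => (key i).2)
    _ = (1 + ρ) ^ n := by simp

lemma corner_hle {m t r : ℕ} (ht : t ≤ m) (hr : r ≤ m) {U : Matrix (Fin m) (Fin m) ℂ}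
    (hU : U ∈ Matrix.unitaryGroup (Fin m) ℂ) (x : Fin t → ℂ) :
    star x ⬝ᵥ (((upperLeftCorner m t r ht hr U)ᴴ * upperLeftCorner m t r ht hr U) *ᵥ x)
      ≤ star x ⬝ᵥ x := by
  set H := upperLeftCorner m t r ht hr U
  set C := lowC m t r ht U
  have hC : Cᴴ * C = 1 - Hᴴ * H := by rw [eq_sub_iff_add_eq, add_comm]; exact col_split ht hr hU
  have h0 : 0 ≤ star x ⬝ᵥ ((Cᴴ * C) *ᵥ x) := (Matrix.posSemidef_conjTranspose_mul_self C).dotProduct_mulVec_nonneg x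
  rw [hC, Matrix.sub_mulVec, dotProduct_sub, Matrix.one_mulVec] at h0
  exact sub_nonneg.mp h0

lemma corner_det_bounds {m t r : ℕ} (ht : t ≤ m) (hr : r ≤ m) {U : Matrix (Fin m) (Fin m) ℂ}
    (hU : U ∈ Matrix.unitaryGroup (Fin m) ℂ) {ρ : ℝ} (hρ : 0 ≤ ρ) :
    1 ≤ (1 + (ρ : ℂ) • ((upperLeftCorner m t r ht hr U)ᴴ * upperLeftCorner m t r ht hr U)).det.re
    ∧ (1 + (ρ : ℂ) • ((upperLeftCorner m t r ht hr U)ᴴ * upperLeftCorner m t r ht hr U)).det.re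
        ≤ (1 + ρ) ^ t :=
  det_re_bounds (Matrix.posSemidef_conjTranspose_mul_self _) (corner_hle ht hr hU) hρ

lemma corner_log_bound {m t r : ℕ} (ht : t ≤ m) (hr : r ≤ m) {U : Matrix (Fin m) (Fin m) ℂ}
    (hU : U ∈ Matrix.unitaryGroup (Fin m) ℂ) {ρ : ℝ} (hρ : 0 ≤ ρ) :
    |Real.log (1 + (ρ : ℂ) •
        ((upperLeftCorner m t r ht hr U)ᴴ * upperLeftCorner m t r ht hr U)).det.re|
      ≤ (t : ℝ) * Real.log (1 + ρ) := by
  obtain ⟨h1, h2⟩ := corner_det_bounds ht hr hU hρ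
  rw [abs_of_nonneg (Real.log_nonneg h1)]
  calc Real.log _ ≤ Real.log ((1 + ρ) ^ t) := Real.log_le_log (by linarith) h2
    _ = (t : ℝ) * Real.log (1 + ρ) := by rw [Real.log_pow]

lemma ddh_det_pos {a b : ℕ} (D : Matrix (Fin a) (Fin b) ℂ) {ρ : ℝ} (hρ : 0 ≤ ρ) :
    0 < (1 + (ρ : ℂ) • (D * Dᴴ)).det.re := by
  have hsm : ((Real.sqrt ρ : ℂ) • D) * ((Real.sqrt ρ : ℂ) • D)ᴴ = (ρ : ℂ) • (D * Dᴴ) := by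
    rw [Matrix.conjTranspose_smul, Matrix.smul_mul, Matrix.mul_smul, smul_smul,
      Complex.star_def, Complex.conj_ofReal, ← Complex.ofReal_mul, Real.mul_self_sqrt hρ]
  have hpsd : ((ρ : ℂ) • (D * Dᴴ)).PosSemidef := by
    rw [← hsm]; exact Matrix.posSemidef_self_mul_conjTranspose _
  have hpd : (1 + (ρ : ℂ) • (D * Dᴴ)).PosDef := Matrix.PosDef.one.add_posSemidef hpsd
  have := hpd.det_pos
  exact (Complex.lt_def.mp this).1

lemma pointwise_log_identity {m t r : ℕ} (ht : t ≤ m) (hr : r ≤ m) (hm : m < r + t)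
    {U : Matrix (Fin m) (Fin m) ℂ} (hU : U ∈ Matrix.unitaryGroup (Fin m) ℂ)
    {ρ : ℝ} (hρ : 0 ≤ ρ) :
    Real.log (1 + (ρ : ℂ) •
        ((upperLeftCorner m t r ht hr U)ᴴ * upperLeftCorner m t r ht hr U)).det.re
      = ((t + r - m : ℕ) : ℝ) * Real.log (1 + ρ) +
        Real.log (1 + (ρ : ℂ) • (lowD m t r U * (lowD m t r U)ᴴ)).det.re := by
  have hid := det_identity ht hr hm hU ρ hρ
  have hcast : ((1 + ρ : ℝ) : ℂ) ^ (t + r - m) = (((1 + ρ) ^ (t + r - m) : ℝ) : ℂ) := by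
    push_cast; ring
  rw [hid, hcast]
  rw [Complex.re_ofReal_mul]
  have hw : 0 < (1 + (ρ : ℂ) • (lowD m t r U * (lowD m t r U)ᴴ)).det.re := ddh_det_pos _ hρ
  rw [Real.log_mul (by positivity) hw.ne', Real.log_pow]

instance matrixBorelSpace (m : ℕ) : BorelSpace (Matrix (Fin m) (Fin m) ℂ) :=
  inferInstanceAs (BorelSpace (Fin m → Fin m → ℂ))
instance matrixSecondCountable (m : ℕ) : SecondCountableTopology (Matrix (Fin m) (Fin m) ℂ) :=
  inferInstanceAs (SecondCountableTopology (Fin m → Fin m → ℂ))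

variable {m : ℕ}

lemma unitary_measurableSet :
    MeasurableSet (Matrix.unitaryGroup (Fin m) ℂ : Set (Matrix (Fin m) (Fin m) ℂ)) := by
  have : (Matrix.unitaryGroup (Fin m) ℂ : Set (Matrix (Fin m) (Fin m) ℂ))
      = (fun U => U * star U) ⁻¹' {1} := by
    ext U; simp [Set.mem_preimage, Matrix.mem_unitaryGroup_iff]
  rw [this]
  exact ((continuous_id.matrix_mul continuous_star).measurable) (measurableSet_singleton 1)

lemma star_measurePreserving (μ : Measure (Matrix (Fin m) (Fin m) ℂ)) [IsProbabilityMeasure μ]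
    (hsupp : ∀ᵐ U ∂μ, U ∈ Matrix.unitaryGroup (Fin m) ℂ)
    (hinv : ∀ V ∈ Matrix.unitaryGroup (Fin m) ℂ,
      MeasurePreserving (fun U => V * U) μ μ) :
    MeasurePreserving (fun U : Matrix (Fin m) (Fin m) ℂ => star U) μ μ := by
  have hS : Measurable (fun U : Matrix (Fin m) (Fin m) ℂ => star U) := continuous_star.measurable
  set ν := μ.map (fun U : Matrix (Fin m) (Fin m) ℂ => star U) with hν
  haveI : IsProbabilityMeasure ν := Measure.isProbabilityMeasure_map hS.aemeasurable
  have hνsupp : ∀ᵐ V ∂ν, V ∈ Matrix.unitaryGroup (Fin m) ℂ := by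
    rw [hν]
    refine (MeasureTheory.ae_map_iff hS.aemeasurable unitary_measurableSet).mpr ?_
    exact hsupp.mono fun U hU => Unitary.star_mem hU
  have hνright : ∀ W ∈ Matrix.unitaryGroup (Fin m) ℂ,
      ν.map (fun U => U * W) = ν := by
    intro W hW
    have hmulW : Measurable (fun U : Matrix (Fin m) (Fin m) ℂ => U * W) :=
      (continuous_id.matrix_mul continuous_const).measurable
    rw [hν, Measure.map_map hmulW hS]
    have hfun : (fun U : Matrix (Fin m) (Fin m) ℂ => U * W) ∘ (fun U => star U)
        = (fun U : Matrix (Fin m) (Fin m) ℂ => star U) ∘ (fun U => star W * U) := by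
      funext U; simp [Function.comp, StarMul.star_mul]
    have hmulL : Measurable (fun U : Matrix (Fin m) (Fin m) ℂ => star W * U) :=
      (continuous_const.matrix_mul continuous_id).measurable
    rw [hfun, ← Measure.map_map hS hmulL]
    rw [(hinv (star W) (Unitary.star_mem hW)).map_eq]
  have key : ∀ f : Matrix (Fin m) (Fin m) ℂ → ENNReal, Measurable f →
      ∫⁻ x, f x ∂μ = ∫⁻ x, f x ∂ν := by
    intro f hf
    have hmul : Measurable (Function.uncurry
        (fun (V U : Matrix (Fin m) (Fin m) ℂ) => f (V * U))) :=
      hf.comp (continuous_fst.matrix_mul continuous_snd).measurable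
    have h1 : ∫⁻ V, (∫⁻ U, f (V * U) ∂μ) ∂ν = ∫⁻ x, f x ∂μ := by
      rw [lintegral_congr_ae (hνsupp.mono fun V hV => (hinv V hV).lintegral_comp hf)]
      simp [lintegral_const]
    have h2 : ∫⁻ U, (∫⁻ V, f (V * U) ∂ν) ∂μ = ∫⁻ x, f x ∂ν := by
      have : ∀ᵐ U ∂μ, ∫⁻ V, f (V * U) ∂ν = ∫⁻ x, f x ∂ν := by
        refine hsupp.mono fun U hU => ?_
        have hmulR : Measurable (fun V : Matrix (Fin m) (Fin m) ℂ => V * U) :=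
          (continuous_id.matrix_mul continuous_const).measurable
        calc ∫⁻ V, f (V * U) ∂ν = ∫⁻ x, f x ∂(ν.map (fun V => V * U)) :=
              (lintegral_map hf hmulR).symm
          _ = ∫⁻ x, f x ∂ν := by rw [hνright U hU]
      rw [lintegral_congr_ae this]
      simp [lintegral_const]
    rw [← h1, ← h2, lintegral_lintegral_swap hmul.aemeasurable]
  have hμν : μ = ν := by
    ext s hs
    rw [← lintegral_indicator_one hs, ← lintegral_indicator_one hs,
      key _ (measurable_one.indicator hs)]
  exact ⟨hS, hμν.symm⟩

lemma right_measurePreserving (μ : Measure (Matrix (Fin m) (Fin m) ℂ)) [IsProbabilityMeasure μ]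
    (hsupp : ∀ᵐ U ∂μ, U ∈ Matrix.unitaryGroup (Fin m) ℂ)
    (hinv : ∀ V ∈ Matrix.unitaryGroup (Fin m) ℂ, MeasurePreserving (fun U => V * U) μ μ)
    {W : Matrix (Fin m) (Fin m) ℂ} (hW : W ∈ Matrix.unitaryGroup (Fin m) ℂ) :
    MeasurePreserving (fun U => U * W) μ μ := by
  have hst := star_measurePreserving μ hsupp hinv
  have hfun : (fun U : Matrix (Fin m) (Fin m) ℂ => U * W)
      = (fun U : Matrix (Fin m) (Fin m) ℂ => star U)
        ∘ ((fun U => star W * U) ∘ (fun U => star U)) := by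
    funext U; simp [Function.comp, StarMul.star_mul]
  rw [hfun]
  exact hst.comp ((hinv (star W) (Unitary.star_mem hW)).comp hst)

lemma T_measurePreserving (μ : Measure (Matrix (Fin m) (Fin m) ℂ)) [IsProbabilityMeasure μ]
    (hsupp : ∀ᵐ U ∂μ, U ∈ Matrix.unitaryGroup (Fin m) ℂ)
    (hinv : ∀ V ∈ Matrix.unitaryGroup (Fin m) ℂ, MeasurePreserving (fun U => V * U) μ μ)
    {A B : Matrix (Fin m) (Fin m) ℂ} (hA : A ∈ Matrix.unitaryGroup (Fin m) ℂ)
    (hB : B ∈ Matrix.unitaryGroup (Fin m) ℂ) :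
    MeasurePreserving (fun U => B * star U * A) μ μ := by
  have hst := star_measurePreserving μ hsupp hinv
  exact (right_measurePreserving μ hsupp hinv hA).comp ((hinv B hB).comp hst)

noncomputable def rowMat (σ : Equiv.Perm (Fin m)) : Matrix (Fin m) (Fin m) ℂ :=
  Matrix.of fun i k => if k = σ i then 1 else 0

noncomputable def colMat (σ : Equiv.Perm (Fin m)) : Matrix (Fin m) (Fin m) ℂ :=
  Matrix.of fun k j => if k = σ j then 1 else 0

lemma rowMat_mul (σ : Equiv.Perm (Fin m)) (M : Matrix (Fin m) (Fin m) ℂ) (i j : Fin m) :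
    (rowMat σ * M) i j = M (σ i) j := by
  rw [Matrix.mul_apply]
  have h : ∀ k, rowMat σ i k * M k j = if k = σ i then M k j else 0 := fun k => by
    simp only [rowMat, Matrix.of_apply, ite_mul, one_mul, zero_mul]
  simp_rw [h]
  rw [Finset.sum_ite_eq' Finset.univ (σ i) (fun k => M k j)]
  simp

lemma mul_colMat (σ : Equiv.Perm (Fin m)) (M : Matrix (Fin m) (Fin m) ℂ) (i j : Fin m) :
    (M * colMat σ) i j = M i (σ j) := by
  rw [Matrix.mul_apply]
  have h : ∀ k, M i k * colMat σ k j = if k = σ j then M i k else 0 := fun k => by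
    simp only [colMat, Matrix.of_apply, mul_ite, mul_one, mul_zero]
  simp_rw [h]
  rw [Finset.sum_ite_eq' Finset.univ (σ j) (fun k => M i k)]
  simp

lemma rowMat_unitary (σ : Equiv.Perm (Fin m)) :
    rowMat σ ∈ Matrix.unitaryGroup (Fin m) ℂ := by
  rw [Matrix.mem_unitaryGroup_iff]
  ext a b
  rw [Matrix.mul_apply]
  have h : ∀ k, rowMat σ a k * (star (rowMat σ)) k b
      = if k = σ a then (if k = σ b then 1 else 0) else 0 := fun k => by
    simp only [rowMat, Matrix.star_apply, Matrix.of_apply]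
    split_ifs <;> simp
  simp_rw [h]
  rw [Finset.sum_ite_eq' Finset.univ (σ a)]
  simp [Matrix.one_apply, EmbeddingLike.apply_eq_iff_eq]

lemma colMat_unitary (σ : Equiv.Perm (Fin m)) :
    colMat σ ∈ Matrix.unitaryGroup (Fin m) ℂ := by
  rw [Matrix.mem_unitaryGroup_iff']
  ext a b
  rw [Matrix.mul_apply]
  have h : ∀ k, (star (colMat σ)) a k * colMat σ k b
      = if k = σ a then (if k = σ b then 1 else 0) else 0 := fun k => by
    simp only [colMat, Matrix.star_apply, Matrix.of_apply]
    split_ifs <;> simp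
  simp_rw [h]
  rw [Finset.sum_ite_eq' Finset.univ (σ a)]
  simp [Matrix.one_apply, EmbeddingLike.apply_eq_iff_eq]

noncomputable def shiftPerm (m k : ℕ) (hm : 0 < m) : Equiv.Perm (Fin m) :=
  haveI : NeZero m := ⟨hm.ne'⟩
  Equiv.addRight (⟨k % m, Nat.mod_lt _ hm⟩ : Fin m)

lemma shiftPerm_apply {m k : ℕ} (hm : 0 < m) (x : Fin m) (hx : x.1 + k < m) :
    shiftPerm m k hm x = ⟨k + x.1, by omega⟩ := by
  haveI : NeZero m := ⟨hm.ne'⟩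
  have hk : k % m = k := Nat.mod_eq_of_lt (by omega)
  ext
  show (x.1 + k % m) % m = k + x.1
  rw [hk, Nat.mod_eq_of_lt (by omega : x.1 + k < m)]
  omega


lemma integrand_measurable {m : ℕ} (t r : ℕ) (ht : t ≤ m) (hr : r ≤ m) (ρ : ℝ) :
    Measurable (fun U : Matrix (Fin m) (Fin m) ℂ =>
      Real.log ((1 + (ρ : ℂ) •
        ((upperLeftCorner m t r ht hr U)ᴴ * upperLeftCorner m t r ht hr U)).det.re)) := by
  have hcorner : Continuous (fun U : Matrix (Fin m) (Fin m) ℂ => upperLeftCorner m t r ht hr U) := by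
    apply continuous_pi; intro i; apply continuous_pi; intro j
    exact (continuous_apply (Fin.castLE ht j)).comp (continuous_apply (Fin.castLE hr i))
  have hdet : Continuous (fun U : Matrix (Fin m) (Fin m) ℂ =>
      (1 + (ρ : ℂ) •
        ((upperLeftCorner m t r ht hr U)ᴴ * upperLeftCorner m t r ht hr U)).det) :=
    Continuous.matrix_det (continuous_const.add
      ((hcorner.matrix_conjTranspose.matrix_mul hcorner).fun_const_smul _))
  exact Real.measurable_log.comp (Complex.continuous_re.comp hdet).measurable

end Aux

/-- The ergodic capacity `C(m_t, m_r, m, ρ) = E[ln det(I + ρ H†H)]`, where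
`H` is the `m_r × m_t` upper-left corner of `U` and the expectation is over the
measure `μ` on the `m × m` complex matrices. -/
noncomputable def ergCap (m : ℕ) (μ : Measure (Matrix (Fin m) (Fin m) ℂ)) (ρ : ℝ)
    (t r : ℕ) (ht : t ≤ m) (hr : r ≤ m) : ℝ :=
  ∫ U, Real.log
      ((1 + (ρ : ℂ) •
          ((upperLeftCorner m t r ht hr U)ᴴ * upperLeftCorner m t r ht hr U)).det.re) ∂μ

/-- Decomposition of the ergodic capacity of the Jacobi MIMO channel in the
regime `m < m_r + m_t`:
`C(m_t, m_r, m, ρ) = (m_t + m_r - m) ln(1+ρ) + C(m - m_r, m - m_t, m, ρ)`,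
where `μ` is the Haar (probability) measure on the unitary group, formalized as
a left-invariant probability measure carried by the unitary matrices. -/
theorem ergodic_capacity_decomposition (m mt mr : ℕ)
    (hmt : 0 < mt) (hmr : 0 < mr) (ht : mt ≤ m) (hr : mr ≤ m) (hm : m < mr + mt)
    (μ : Measure (Matrix (Fin m) (Fin m) ℂ)) [IsProbabilityMeasure μ]
    (hsupp : ∀ᵐ U ∂μ, U ∈ Matrix.unitaryGroup (Fin m) ℂ)
    (hinv : ∀ V ∈ Matrix.unitaryGroup (Fin m) ℂ,
      MeasurePreserving (fun U => V * U) μ μ)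
    (ρ : ℝ) (hρ : 0 ≤ ρ) :
    ergCap m μ ρ mt mr ht hr =
      ((mt : ℝ) + mr - m) * Real.log (1 + ρ) +
        ergCap m μ ρ (m - mr) (m - mt) (Nat.sub_le m mr) (Nat.sub_le m mt) := by
  classical
  have hm0 : 0 < m := lt_of_lt_of_le hmt ht
  set G := Matrix.unitaryGroup (Fin m) ℂ with hG
  have hA : colMat (shiftPerm m mr hm0) ∈ G := colMat_unitary _
  have hB : rowMat (shiftPerm m mt hm0) ∈ G := rowMat_unitary _
  have hT : MeasurePreserving
      (fun U => rowMat (shiftPerm m mt hm0) * star U * colMat (shiftPerm m mr hm0)) μ μ :=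
    T_measurePreserving μ hsupp hinv hA hB
  set T : Matrix (Fin m) (Fin m) ℂ → Matrix (Fin m) (Fin m) ℂ :=
    fun U => rowMat (shiftPerm m mt hm0) * star U * colMat (shiftPerm m mr hm0) with hTdef
  set g : Matrix (Fin m) (Fin m) ℂ → ℝ := fun U => Real.log
      ((1 + (ρ : ℂ) •
          ((upperLeftCorner m (m - mr) (m - mt) (Nat.sub_le m mr) (Nat.sub_le m mt) U)ᴴ *
            upperLeftCorner m (m - mr) (m - mt) (Nat.sub_le m mr) (Nat.sub_le m mt) U)).det.re)
    with hgdef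
  have hentry : ∀ U : Matrix (Fin m) (Fin m) ℂ,
      upperLeftCorner m (m - mr) (m - mt) (Nat.sub_le m mr) (Nat.sub_le m mt) (T U)
        = (lowD m mt mr U)ᴴ := by
    intro U
    ext i j
    show (rowMat (shiftPerm m mt hm0) * star U * colMat (shiftPerm m mr hm0))
        (Fin.castLE (Nat.sub_le m mt) i) (Fin.castLE (Nat.sub_le m mr) j) = _
    rw [mul_colMat, rowMat_mul]
    rw [shiftPerm_apply hm0 (Fin.castLE (Nat.sub_le m mr) j) (by
      have := j.2; simp only [Fin.coe_castLE]; omega)]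
    rw [shiftPerm_apply hm0 (Fin.castLE (Nat.sub_le m mt) i) (by
      have := i.2; simp only [Fin.coe_castLE]; omega)]
    simp [lowD, Matrix.conjTranspose_apply, Matrix.star_apply, Fin.coe_castLE]
  have hgmeas : Measurable g := integrand_measurable _ _ _ _ _
  have hpt : ∀ᵐ U ∂μ, Real.log
      ((1 + (ρ : ℂ) •
          ((upperLeftCorner m mt mr ht hr U)ᴴ * upperLeftCorner m mt mr ht hr U)).det.re)
      = ((mt + mr - m : ℕ) : ℝ) * Real.log (1 + ρ) + g (T U) := by
    refine hsupp.mono fun U hU => ?_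
    rw [pointwise_log_identity ht hr (by omega) hU hρ]
    congr 1
    rw [hgdef]
    simp only []
    rw [hentry U, Matrix.conjTranspose_conjTranspose]
  have hTU_mem : ∀ᵐ U ∂μ, T U ∈ G := by
    refine hsupp.mono fun U hU => ?_
    exact mul_mem (mul_mem hB (Unitary.star_mem hU)) hA
  have hint : Integrable (fun U => g (T U)) μ := by
    refine Integrable.mono' (integrable_const (((m - mr : ℕ) : ℝ) * Real.log (1 + ρ)))
      ((hgmeas.comp hT.measurable).aestronglyMeasurable) ?_
    refine hTU_mem.mono fun U hU => ?_
    rw [Real.norm_eq_abs]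
    exact corner_log_bound (Nat.sub_le m mr) (Nat.sub_le m mt) hU hρ
  have hcomp : ∫ U, g (T U) ∂μ = ∫ U, g U ∂μ := by
    have h1 : ∫ y, g y ∂(μ.map T) = ∫ x, g (T x) ∂μ :=
      integral_map hT.measurable.aemeasurable
        (by rw [hT.map_eq]; exact hgmeas.aestronglyMeasurable)
    rw [← h1, hT.map_eq]
  unfold ergCap
  rw [integral_congr_ae hpt, integral_add (integrable_const _) hint, integral_const]
  have hμuniv : μ.real Set.univ = 1 := by simp
  rw [hcomp]
  have hcast : ((mt + mr - m : ℕ) : ℝ) = (mt : ℝ) + mr - m := by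
    have : m ≤ mt + mr := by omega
    push_cast [Nat.cast_sub this]
    ring
  rw [hμuniv, hcast, one_smul]
end
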